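/- Let α ∈ (0,∞)^d, let P(t) = Σ_{|k|=n} a_k t^k be a homogeneous polynomial of degree n with nonnegative coefficients, not all zero, and let μ be the probability measure on T_d with density proportional to (∏ t_i^{α_i−1}) P(t). Define Q(y) = Σ_{|k|=n} a_k ∏_i (y_i)_{k_i}, where (y)_k = y(y+1)...(y+k−1) is the rising factorial. Then for every p ∈ ℤ_+^d and i, the reinforcement law V_i(p) = E_μ[X_i X^p]/E_μ[X^p] equals ((α_i+p_i)/((Σ_j α_j+p_j)+n)) · Q(α_1+p_1,...,α_i+p_i+1,...,α_d+p_d)/Q(α_1+p_1,...,α_d+p_d). -/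

import Mathlib

open MeasureTheory Finset

section DirichletAux
open Set
open scoped ENNReal

lemma gamma_shift (x : ℝ) (hx : 0 < x) (k : ℕ) :
    Real.Gamma (x + k) = Real.Gamma x * ∏ r ∈ range k, (x + r) := by
  induction k with
  | zero => simp
  | succ k ih =>
    have hxk : x + k ≠ 0 := by positivity
    have : (x : ℝ) + (k + 1 : ℕ) = (x + k) + 1 := by push_cast; ring
    rw [this, Real.Gamma_add_one hxk, ih, prod_range_succ]
    push_cast; ring

lemma beta_integrableOn {a b : ℝ} (ha : 0 < a) (hb : 0 < b) :
    IntegrableOn (fun x : ℝ => x ^ (a - 1) * (1 - x) ^ (b - 1)) (Ioc 0 1) volume := by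
  have hc : IntervalIntegrable (fun x : ℝ => (x : ℂ) ^ ((a : ℂ) - 1) * ((1 : ℂ) - x) ^ ((b : ℂ) - 1))
      volume 0 1 := Complex.betaIntegral_convergent (by simpa using ha) (by simpa using hb)
  have hre : IntegrableOn (fun x : ℝ => ((x : ℂ) ^ ((a : ℂ) - 1) * ((1 : ℂ) - x) ^ ((b : ℂ) - 1)).re)
      (Ioc 0 1) volume := (hc.1).re
  refine hre.congr_fun (fun x hx => ?_) measurableSet_Ioc
  have hx0 : (0:ℝ) ≤ x := le_of_lt hx.1
  have hx1 : (0:ℝ) ≤ 1 - x := by linarith [hx.2]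
  have h1 : ((x : ℂ)) ^ ((a : ℂ) - 1) = ((x ^ (a - 1) : ℝ) : ℂ) := by
    rw [Complex.ofReal_cpow hx0]; push_cast; ring_nf
  have h2 : ((1 : ℂ) - x) ^ ((b : ℂ) - 1) = (((1 - x) ^ (b - 1) : ℝ) : ℂ) := by
    rw [show ((1:ℂ) - x) = (((1 - x : ℝ)) : ℂ) by push_cast; ring, Complex.ofReal_cpow hx1]
    push_cast; ring_nf
  dsimp only
  rw [h1, h2, ← Complex.ofReal_mul, Complex.ofReal_re]

lemma beta_value {a b : ℝ} (ha : 0 < a) (hb : 0 < b) :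
    ∫ x in Ioc (0:ℝ) 1, x ^ (a - 1) * (1 - x) ^ (b - 1) =
      Real.Gamma a * Real.Gamma b / Real.Gamma (a + b) := by
  have hc : IntervalIntegrable (fun x : ℝ => (x : ℂ) ^ ((a : ℂ) - 1) * ((1 : ℂ) - x) ^ ((b : ℂ) - 1))
      volume 0 1 := Complex.betaIntegral_convergent (by simpa using ha) (by simpa using hb)
  have hΓ : Real.Gamma (a + b) ≠ 0 := (Real.Gamma_pos_of_pos (by positivity)).ne'
  have hbeta : Complex.betaIntegral a b =
      ((Real.Gamma a * Real.Gamma b / Real.Gamma (a + b) : ℝ) : ℂ) := by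
    have h := Complex.Gamma_mul_Gamma_eq_betaIntegral (s := (a : ℂ)) (t := (b : ℂ))
      (by simpa using ha) (by simpa using hb)
    have hΓC : Complex.Gamma ((a : ℂ) + b) ≠ 0 := by
      rw [show ((a : ℂ) + b) = ((a + b : ℝ) : ℂ) by push_cast; ring, Complex.Gamma_ofReal]
      exact_mod_cast hΓ
    rw [show ((a : ℂ) + b) = ((a + b : ℝ) : ℂ) by push_cast; ring] at h hΓC
    simp only [Complex.Gamma_ofReal] at h hΓC
    have hΓC' : ((Real.Gamma (a + b) : ℝ) : ℂ) ≠ 0 := hΓC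
    rw [Complex.ofReal_div, Complex.ofReal_mul, eq_div_iff hΓC', mul_comm _ ((Real.Gamma (a+b) : ℝ) : ℂ), ← h]
  have heq : ∀ x ∈ Ioc (0:ℝ) 1,
      x ^ (a - 1) * (1 - x) ^ (b - 1) =
        ((x : ℂ) ^ ((a : ℂ) - 1) * ((1 : ℂ) - x) ^ ((b : ℂ) - 1)).re := by
    intro x hx
    have hx0 : (0:ℝ) ≤ x := le_of_lt hx.1
    have hx1 : (0:ℝ) ≤ 1 - x := by linarith [hx.2]
    have h1 : ((x : ℂ)) ^ ((a : ℂ) - 1) = ((x ^ (a - 1) : ℝ) : ℂ) := by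
      rw [Complex.ofReal_cpow hx0]; push_cast; ring_nf
    have h2 : ((1 : ℂ) - x) ^ ((b : ℂ) - 1) = (((1 - x) ^ (b - 1) : ℝ) : ℂ) := by
      rw [show ((1:ℂ) - x) = (((1 - x : ℝ)) : ℂ) by push_cast; ring, Complex.ofReal_cpow hx1]
      push_cast; ring_nf
    rw [h1, h2, ← Complex.ofReal_mul, Complex.ofReal_re]
  calc ∫ x in Ioc (0:ℝ) 1, x ^ (a - 1) * (1 - x) ^ (b - 1)
      = ∫ x in Ioc (0:ℝ) 1, ((x : ℂ) ^ ((a : ℂ) - 1) * ((1 : ℂ) - x) ^ ((b : ℂ) - 1)).re :=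
        setIntegral_congr_fun measurableSet_Ioc heq
    _ = (∫ x in Ioc (0:ℝ) 1, (x : ℂ) ^ ((a : ℂ) - 1) * ((1 : ℂ) - x) ^ ((b : ℂ) - 1)).re :=
        integral_re hc.1
    _ = (Complex.betaIntegral a b).re := by
        rw [Complex.betaIntegral, intervalIntegral.integral_of_le zero_le_one]
    _ = Real.Gamma a * Real.Gamma b / Real.Gamma (a + b) := by rw [hbeta, Complex.ofReal_re]

lemma measurable_betaKernel (a b s : ℝ) :
    Measurable (fun x : ℝ => ENNReal.ofReal (x ^ (a - 1) * (s - x) ^ (b - 1))) := by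
  fun_prop

lemma lbeta {a b s : ℝ} (ha : 0 < a) (hb : 0 < b) (hs : 0 < s) :
    ∫⁻ x in Ioo (0:ℝ) s, ENNReal.ofReal (x ^ (a - 1) * (s - x) ^ (b - 1)) =
      ENNReal.ofReal (s ^ (a + b - 1) * (Real.Gamma a * Real.Gamma b / Real.Gamma (a + b))) := by
  set B : ℝ := Real.Gamma a * Real.Gamma b / Real.Gamma (a + b) with hB
  have h01 : ∫⁻ x in Ioo (0:ℝ) 1, ENNReal.ofReal (x ^ (a - 1) * (1 - x) ^ (b - 1)) =
      ENNReal.ofReal B := by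
    have hint : IntegrableOn (fun x : ℝ => x ^ (a - 1) * (1 - x) ^ (b - 1)) (Ioo 0 1) volume :=
      (beta_integrableOn ha hb).mono_set Ioo_subset_Ioc_self
    rw [← ofReal_integral_eq_lintegral_ofReal hint ?_]
    · rw [setIntegral_congr_set Ioo_ae_eq_Ioc, beta_value ha hb]
    · filter_upwards [ae_restrict_mem measurableSet_Ioo] with x hx
      have h1 : (0:ℝ) ≤ x ^ (a - 1) := Real.rpow_nonneg hx.1.le _
      have h2 : (0:ℝ) ≤ (1 - x) ^ (b - 1) := Real.rpow_nonneg (by linarith [hx.2]) _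
      positivity
  have hmap : Measure.map (fun u : ℝ => s * u) volume = ENNReal.ofReal |s⁻¹| • volume :=
    Real.map_volume_mul_left hs.ne'
  have hvol : (volume : Measure ℝ) = ENNReal.ofReal s • Measure.map (fun u : ℝ => s * u) volume := by
    rw [hmap, smul_smul, ← ENNReal.ofReal_mul hs.le, abs_of_pos (inv_pos.mpr hs),
      mul_inv_cancel₀ hs.ne', ENNReal.ofReal_one, one_smul]
  rw [← lintegral_indicator measurableSet_Ioo _]
  rw [hvol, lintegral_smul_measure,
    lintegral_map ((measurable_betaKernel a b s).indicator measurableSet_Ioo)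
      (measurable_const_mul s)]
  have hpt : ∀ u : ℝ,
      (Ioo (0:ℝ) s).indicator (fun x => ENNReal.ofReal (x ^ (a - 1) * (s - x) ^ (b - 1))) (s * u) =
      (Ioo (0:ℝ) 1).indicator
        (fun u => ENNReal.ofReal (s ^ (a + b - 2) * (u ^ (a - 1) * (1 - u) ^ (b - 1)))) u := by
    intro u
    by_cases hu : u ∈ Ioo (0:ℝ) 1
    · have hmem : s * u ∈ Ioo (0:ℝ) s := by
        constructor
        · exact mul_pos hs hu.1
        · nlinarith [hu.2]
      rw [Set.indicator_of_mem hmem, Set.indicator_of_mem hu]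
      congr 1
      have e1 : (s * u) ^ (a - 1) = s ^ (a - 1) * u ^ (a - 1) :=
        Real.mul_rpow hs.le hu.1.le
      have e2 : (s - s * u) ^ (b - 1) = s ^ (b - 1) * (1 - u) ^ (b - 1) := by
        rw [show s - s * u = s * (1 - u) by ring, Real.mul_rpow hs.le (by linarith [hu.2])]
      rw [e1, e2, show s ^ (a-1) * u ^ (a-1) * (s ^ (b-1) * (1-u) ^ (b-1)) =
        (s ^ (a-1) * s ^ (b-1)) * (u ^ (a-1) * (1-u) ^ (b-1)) by ring,
        ← Real.rpow_add hs]
      ring_nf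
    · have hmem : s * u ∉ Ioo (0:ℝ) s := by
        simp only [Set.mem_Ioo, not_and_or, not_lt] at hu ⊢
        rcases hu with h | h
        · left; nlinarith
        · right; nlinarith
      rw [Set.indicator_of_notMem hmem, Set.indicator_of_notMem hu]
  simp_rw [hpt]
  rw [lintegral_indicator measurableSet_Ioo _]
  have : ∀ u : ℝ, ENNReal.ofReal (s ^ (a + b - 2) * (u ^ (a - 1) * (1 - u) ^ (b - 1))) =
      ENNReal.ofReal (s ^ (a + b - 2)) * ENNReal.ofReal (u ^ (a - 1) * (1 - u) ^ (b - 1)) :=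
    fun u => ENNReal.ofReal_mul (Real.rpow_nonneg hs.le _)
  simp_rw [this]
  rw [lintegral_const_mul' _ _ ENNReal.ofReal_ne_top, h01, smul_eq_mul, ← mul_assoc,
    ← ENNReal.ofReal_mul hs.le, ← ENNReal.ofReal_mul (by positivity)]
  congr 1
  rw [show s * s ^ (a + b - 2) = s ^ (1:ℝ) * s ^ (a + b - 2) by rw [Real.rpow_one],
    ← Real.rpow_add hs]
  ring_nf

def Sset (m : ℕ) (s : ℝ) : Set (Fin m → ℝ) := {y | (∀ i, 0 < y i) ∧ ∑ i, y i < s}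

lemma measurableSet_Sset (m : ℕ) (s : ℝ) : MeasurableSet (Sset m s) := by
  have : Sset m s = (⋂ i, (fun y : Fin m → ℝ => y i) ⁻¹' (Ioi 0)) ∩
      ((fun y : Fin m → ℝ => ∑ i, y i) ⁻¹' (Iio s)) := by
    ext y; simp [Sset, Set.mem_iInter]
  rw [this]
  exact MeasurableSet.inter
    (MeasurableSet.iInter fun i => (measurable_pi_apply i) measurableSet_Ioi)
    ((by fun_prop : Measurable fun y : Fin m → ℝ => ∑ i, y i) measurableSet_Iio)

lemma measurable_dk (m : ℕ) (β : Fin (m+1) → ℝ) (s : ℝ) :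
    Measurable (fun y : Fin m → ℝ =>
      ENNReal.ofReal ((∏ i, y i ^ (β i.castSucc - 1)) * (s - ∑ i, y i) ^ (β (Fin.last m) - 1))) := by
  fun_prop

lemma dirichlet : ∀ (m : ℕ) (β : Fin (m+1) → ℝ), (∀ i, 0 < β i) → ∀ (s : ℝ), 0 < s →
    ∫⁻ y : Fin m → ℝ, (Sset m s).indicator
      (fun y => ENNReal.ofReal ((∏ i, y i ^ (β i.castSucc - 1)) *
        (s - ∑ i, y i) ^ (β (Fin.last m) - 1))) y
    = ENNReal.ofReal (s ^ ((∑ i, β i) - 1) *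
        ((∏ i, Real.Gamma (β i)) / Real.Gamma (∑ i, β i))) := by
  intro m
  induction m with
  | zero =>
    intro β hβ s hs
    have h0 : (fun _ : Fin 0 => (0:ℝ)) ∈ Sset 0 s := by
      constructor
      · intro i; exact absurd i.2 (by omega)
      · simpa using hs
    rw [volume_pi, Measure.pi_of_empty (fun _ : Fin 0 => (volume : Measure ℝ)) 0,
      lintegral_dirac' _ (((measurable_dk 0 β s)).indicator (measurableSet_Sset 0 s))]
    have hz : (0 : Fin 0 → ℝ) = (fun _ : Fin 0 => (0:ℝ)) := rfl
    rw [hz, Set.indicator_of_mem h0]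
    have hΓ : Real.Gamma (β 0) ≠ 0 := (Real.Gamma_pos_of_pos (hβ 0)).ne'
    simp only [Finset.univ_eq_empty, Finset.prod_empty, Finset.sum_empty, one_mul, sub_zero]
    rw [Fin.sum_univ_one, Fin.prod_univ_one]
    rw [div_self hΓ, mul_one]
    rfl
  | succ m ih =>
    intro β hβ s hs
    set β' : Fin (m+1) → ℝ := fun j => β j.succ with hβ'
    have hβ'pos : ∀ j, 0 < β' j := fun j => hβ _
    set σ : ℝ := ∑ j, β' j with hσ
    have hσpos : 0 < σ := Finset.sum_pos (fun j _ => hβ'pos j) Finset.univ_nonempty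
    set C : ℝ := (∏ j, Real.Gamma (β' j)) / Real.Gamma σ with hC
    have hCpos : 0 < C := by
      apply div_pos
      · exact Finset.prod_pos fun j _ => Real.Gamma_pos_of_pos (hβ'pos j)
      · exact Real.Gamma_pos_of_pos hσpos
    set F : (Fin (m+1) → ℝ) → ℝ≥0∞ := (Sset (m+1) s).indicator
      (fun y => ENNReal.ofReal ((∏ i, y i ^ (β i.castSucc - 1)) *
        (s - ∑ i, y i) ^ (β (Fin.last (m+1)) - 1))) with hF
    have hFmeas : Measurable F :=
      (measurable_dk (m+1) β s).indicator (measurableSet_Sset (m+1) s)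
    -- peel off the first coordinate
    have hmp := measurePreserving_piFinSuccAbove (fun _ : Fin (m+1) => (volume : Measure ℝ)) 0
    set e := MeasurableEquiv.piFinSuccAbove (fun _ : Fin (m+1) => ℝ) 0 with he
    have hstep : ∫⁻ y : Fin (m+1) → ℝ, F y
        = ∫⁻ z : ℝ × (Fin m → ℝ), F (e.symm z)
            ∂((volume : Measure ℝ).prod (Measure.pi fun _ : Fin m => (volume : Measure ℝ))) := by
      rw [volume_pi, ← hmp.map_eq, lintegral_map_equiv]
      congr 1; ext y; simp
    -- pointwise identity for F ∘ cons
    have hG : ∀ (x : ℝ) (w : Fin m → ℝ), F (Fin.cons x w) =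
        (Ioo (0:ℝ) s).indicator (fun x => ENNReal.ofReal (x ^ (β 0 - 1))) x *
        (Sset m (s - x)).indicator
          (fun w => ENNReal.ofReal ((∏ i, w i ^ (β' i.castSucc - 1)) *
            ((s - x) - ∑ i, w i) ^ (β' (Fin.last m) - 1))) w := by
      intro x w
      simp only [hF]
      have hmem : Fin.cons x w ∈ Sset (m+1) s ↔
          (0 < x ∧ (∀ i, 0 < w i)) ∧ x + ∑ i, w i < s := by
        simp only [Sset, Set.mem_setOf_eq, Fin.forall_fin_succ, Fin.cons_zero, Fin.cons_succ,
          Fin.sum_cons]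
      by_cases hx : x ∈ Ioo (0:ℝ) s
      · by_cases hw : w ∈ Sset m (s - x)
        · have hin : Fin.cons x w ∈ Sset (m+1) s := by
            rw [hmem]
            exact ⟨⟨hx.1, hw.1⟩, by linarith [hw.2]⟩
          rw [Set.indicator_of_mem hin, Set.indicator_of_mem hx, Set.indicator_of_mem hw,
            ← ENNReal.ofReal_mul (Real.rpow_nonneg hx.1.le _)]
          congr 1
          rw [Fin.prod_univ_succ]
          simp only [Fin.cons_zero, Fin.cons_succ, Fin.castSucc_zero, Fin.sum_cons]
          have h1 : ∀ j : Fin m, β (Fin.castSucc (Fin.succ j)) = β' (Fin.castSucc j) := by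
            intro j; simp only [hβ', Fin.succ_castSucc]
          have h2 : β (Fin.last (m+1)) = β' (Fin.last m) := by simp only [hβ', Fin.succ_last]
          rw [h2]
          have h3 : (∏ j : Fin m, w j ^ (β (Fin.castSucc (Fin.succ j)) - 1)) =
              ∏ j : Fin m, w j ^ (β' (Fin.castSucc j) - 1) := by
            exact Finset.prod_congr rfl fun j _ => by rw [h1 j]
          rw [h3, show s - (x + ∑ i, w i) = (s - x) - ∑ i, w i by ring]
          ring
        · have hout : Fin.cons x w ∉ Sset (m+1) s := by
            rw [hmem]
            rintro ⟨⟨h1, h2⟩, h3⟩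
            exact hw ⟨h2, by linarith⟩
          rw [Set.indicator_of_notMem hout, Set.indicator_of_notMem hw, mul_zero]
      · have hout : Fin.cons x w ∉ Sset (m+1) s := by
          rw [hmem]
          rintro ⟨⟨h1, h2⟩, h3⟩
          apply hx
          constructor
          · exact h1
          · have : (0:ℝ) ≤ ∑ i, w i := Finset.sum_nonneg fun i _ => (h2 i).le
            linarith
        rw [Set.indicator_of_notMem hout, Set.indicator_of_notMem hx, zero_mul]
    -- apply Fubini
    have hconsz : ∀ z : ℝ × (Fin m → ℝ), e.symm z = Fin.cons z.1 z.2 := by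
      intro z
      simp [he, MeasurableEquiv.piFinSuccAbove_symm_apply, Fin.insertNthEquiv,
        Fin.insertNth_zero']
    have hmeasz : Measurable (fun z : ℝ × (Fin m → ℝ) => F (e.symm z)) :=
      hFmeas.comp e.symm.measurable
    rw [hstep, lintegral_prod _ hmeasz.aemeasurable]
    -- inner integral
    have hinner : ∀ x : ℝ,
        (∫⁻ w : Fin m → ℝ, F (e.symm (x, w)) ∂(Measure.pi fun _ : Fin m => (volume : Measure ℝ)))
        = (Ioo (0:ℝ) s).indicator (fun x => ENNReal.ofReal (x ^ (β 0 - 1) * (s - x) ^ (σ - 1)) *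
            ENNReal.ofReal C) x := by
      intro x
      simp only [hconsz]
      by_cases hx : x ∈ Ioo (0:ℝ) s
      · have hsx : 0 < s - x := by have := hx.2; linarith
        calc ∫⁻ w, F (Fin.cons x w) ∂(Measure.pi fun _ : Fin m => (volume : Measure ℝ))
            = ∫⁻ w, ((Ioo (0:ℝ) s).indicator (fun x => ENNReal.ofReal (x ^ (β 0 - 1))) x) *
              (Sset m (s - x)).indicator
                (fun w => ENNReal.ofReal ((∏ i, w i ^ (β' i.castSucc - 1)) *
                  ((s - x) - ∑ i, w i) ^ (β' (Fin.last m) - 1))) w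
                ∂(Measure.pi fun _ : Fin m => (volume : Measure ℝ)) := by
              exact lintegral_congr fun w => hG x w
          _ = ((Ioo (0:ℝ) s).indicator (fun x => ENNReal.ofReal (x ^ (β 0 - 1))) x) *
              ∫⁻ w, (Sset m (s - x)).indicator
                (fun w => ENNReal.ofReal ((∏ i, w i ^ (β' i.castSucc - 1)) *
                  ((s - x) - ∑ i, w i) ^ (β' (Fin.last m) - 1))) w
                ∂(Measure.pi fun _ : Fin m => (volume : Measure ℝ)) := by
              apply lintegral_const_mul'
              by_cases h : x ∈ Ioo (0:ℝ) s
              · rw [Set.indicator_of_mem h]; exact ENNReal.ofReal_ne_top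
              · rw [Set.indicator_of_notMem h]; exact ENNReal.zero_ne_top
          _ = ENNReal.ofReal (x ^ (β 0 - 1)) *
              ENNReal.ofReal ((s - x) ^ (σ - 1) * C) := by
              rw [Set.indicator_of_mem hx, ← volume_pi, ih β' hβ'pos (s - x) hsx]
          _ = (Ioo (0:ℝ) s).indicator (fun x => ENNReal.ofReal (x ^ (β 0 - 1) * (s - x) ^ (σ - 1)) *
              ENNReal.ofReal C) x := by
              rw [Set.indicator_of_mem hx, ← ENNReal.ofReal_mul (Real.rpow_nonneg hx.1.le _),
                ← ENNReal.ofReal_mul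
                  (mul_nonneg (Real.rpow_nonneg hx.1.le _) (Real.rpow_nonneg hsx.le _))]
              congr 1
              ring
      · rw [Set.indicator_of_notMem hx]
        have : ∀ w : Fin m → ℝ, F (Fin.cons x w) = 0 := by
          intro w; rw [hG x w, Set.indicator_of_notMem hx, zero_mul]
        simp only [this, lintegral_zero]
    simp only [hinner]
    -- outer beta integral
    rw [lintegral_indicator measurableSet_Ioo _,
      lintegral_mul_const' _ _ ENNReal.ofReal_ne_top,
      lbeta (hβ 0) hσpos hs, ← ENNReal.ofReal_mul (mul_nonneg (Real.rpow_nonneg hs.le _)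
        (div_pos (mul_pos (Real.Gamma_pos_of_pos (hβ 0)) (Real.Gamma_pos_of_pos hσpos))
          (Real.Gamma_pos_of_pos (add_pos (hβ 0) hσpos))).le)]
    congr 1
    have hsum : ∑ i, β i = β 0 + σ := by simp only [hσ, hβ', Fin.sum_univ_succ]
    have hprod : ∏ i, Real.Gamma (β i) = Real.Gamma (β 0) * ∏ j, Real.Gamma (β' j) := by
      simp only [hβ', Fin.prod_univ_succ]
    rw [hsum, hprod, hC]
    have hΓσ : Real.Gamma σ ≠ 0 := (Real.Gamma_pos_of_pos hσpos).ne'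
    have hΓβσ : Real.Gamma (β 0 + σ) ≠ 0 := (Real.Gamma_pos_of_pos (add_pos (hβ 0) hσpos)).ne'
    field_simp

section Moment

variable {m : ℕ} {α : Fin (m + 1) → ℝ} {n : ℕ} {a : (Fin (m + 1) → ℕ) → ℝ}
  {P : (Fin (m + 1) → ℝ) → ℝ} {c : ℝ} {μ : Measure (Fin (m + 1) → ℝ)}

lemma measurable_snocmap (m : ℕ) :
    Measurable (fun y : Fin m → ℝ => (Fin.snoc y (1 - ∑ i, y i) : Fin (m+1) → ℝ)) := by
  rw [measurable_pi_iff]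
  intro j
  refine Fin.lastCases ?_ ?_ j
  · simp only [Fin.snoc_last]
    fun_prop
  · intro i
    simp only [Fin.snoc_castSucc]
    exact measurable_pi_apply i

lemma moment_formula (hα : ∀ i, 0 < α i) (ha : ∀ k, 0 ≤ a k)
    (hP : ∀ t, P t = ∑ k ∈ (Fintype.piFinset fun _ : Fin (m + 1) => Finset.range (n + 1)).filter
        (fun k => ∑ i, k i = n), a k * ∏ i, t i ^ k i)
    (hc : 0 < c)
    (hμ : μ = Measure.map (fun y : Fin m → ℝ => Fin.snoc y (1 - ∑ i, y i))
      ((volume : Measure (Fin m → ℝ)).withDensity fun y =>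
        ENNReal.ofReal
          (if (∀ i, 0 < y i) ∧ ∑ i, y i < 1 then
            c * (∏ i : Fin (m + 1), (Fin.snoc y (1 - ∑ j, y j) i) ^ (α i - 1)) *
              P (Fin.snoc y (1 - ∑ j, y j))
          else 0)))
    (q : Fin (m + 1) → ℕ) :
    ∫ x, (∏ j, x j ^ q j) ∂μ =
      c * ((∏ j, Real.Gamma (α j + q j)) / Real.Gamma ((∑ j, (α j + (q j : ℝ))) + n)) *
        ∑ k ∈ (Fintype.piFinset fun _ : Fin (m + 1) => Finset.range (n + 1)).filter
          (fun k => ∑ i, k i = n), a k * ∏ j, ∏ r ∈ Finset.range (k j), ((α j + q j) + r) := by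
  classical
  set K := (Fintype.piFinset fun _ : Fin (m + 1) => Finset.range (n + 1)).filter
      (fun k => ∑ i, k i = n) with hK
  set T : (Fin m → ℝ) → (Fin (m + 1) → ℝ) := fun y => Fin.snoc y (1 - ∑ i, y i) with hTdef
  have hT : Measurable T := measurable_snocmap m
  set gden : (Fin m → ℝ) → ℝ≥0∞ := fun y =>
    ENNReal.ofReal
      (if (∀ i, 0 < y i) ∧ ∑ i, y i < 1 then
        c * (∏ i : Fin (m + 1), (T y i) ^ (α i - 1)) * P (T y)
      else 0) with hgden
  have hgmeas : Measurable gden := by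
    have hmeas2 : Measurable fun t : Fin (m+1) → ℝ =>
        c * (∏ i : Fin (m + 1), t i ^ (α i - 1)) * P t := by
      have hPfun : P = fun t => ∑ k ∈ K, a k * ∏ i, t i ^ k i := funext hP
      rw [hPfun]
      fun_prop
    have : gden = (Sset m 1).indicator
        (fun y => ENNReal.ofReal (c * (∏ i : Fin (m + 1), (T y i) ^ (α i - 1)) * P (T y))) := by
      funext y
      by_cases hy : y ∈ Sset m 1
      · rw [Set.indicator_of_mem hy, hgden]
        simp only [if_pos (show (∀ i, 0 < y i) ∧ ∑ i, y i < 1 from hy)]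
      · rw [Set.indicator_of_notMem hy, hgden]
        simp only [if_neg (show ¬((∀ i, 0 < y i) ∧ ∑ i, y i < 1) from hy), ENNReal.ofReal_zero]
    rw [this]
    exact ((hmeas2.comp hT).ennreal_ofReal).indicator (measurableSet_Sset m 1)
  have hTpos : ∀ y ∈ Sset m 1, ∀ j, 0 < T y j := by
    intro y hy j
    refine Fin.lastCases ?_ ?_ j
    · rw [hTdef]; simp only [Fin.snoc_last]; linarith [hy.2]
    · intro i; rw [hTdef]; simp only [Fin.snoc_castSucc]; exact hy.1 i
  -- the moments as lintegrals
  have hfmeas : Measurable (fun x : Fin (m+1) → ℝ => ∏ j, x j ^ q j) := by fun_prop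
  have hmsetNN : MeasurableSet {x : Fin (m+1) → ℝ | ∀ j, 0 ≤ x j} := by
    have : {x : Fin (m+1) → ℝ | ∀ j, 0 ≤ x j} = ⋂ j, (fun x : Fin (m+1) → ℝ => x j) ⁻¹' (Ici 0) := by
      ext x; simp [Set.mem_iInter]
    rw [this]
    exact MeasurableSet.iInter fun j => (measurable_pi_apply j) measurableSet_Ici
  have hae_nonneg : ∀ᵐ x ∂μ, ∀ j, 0 ≤ x j := by
    rw [hμ, ae_map_iff hT.aemeasurable hmsetNN, ae_withDensity_iff hgmeas]
    filter_upwards with y hy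
    intro j
    have hyS : y ∈ Sset m 1 := by
      by_contra hne
      apply hy
      rw [hgden]
      simp only [if_neg (show ¬((∀ i, 0 < y i) ∧ ∑ i, y i < 1) from hne), ENNReal.ofReal_zero]
    exact (hTpos y hyS j).le
  have hint : ∫ x, (∏ j, x j ^ q j) ∂μ =
      (∫⁻ x, ENNReal.ofReal (∏ j, x j ^ q j) ∂μ).toReal := by
    apply integral_eq_lintegral_of_nonneg_ae
    · filter_upwards [hae_nonneg] with x hx
      exact Finset.prod_nonneg fun j _ => pow_nonneg (hx j) _
    · exact hfmeas.aestronglyMeasurable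
  set β : (Fin (m+1) → ℕ) → (Fin (m+1) → ℝ) := fun k j => α j + q j + k j with hβdef
  have hαq : ∀ j, 0 < α j + (q j : ℝ) :=
    fun j => add_pos_of_pos_of_nonneg (hα j) (Nat.cast_nonneg _)
  have hβpos : ∀ k j, 0 < β k j := fun k j => by
    rw [hβdef]
    exact add_pos_of_pos_of_nonneg (hαq j) (Nat.cast_nonneg _)
  have key : ∀ y, gden y * ENNReal.ofReal (∏ j, (T y j) ^ q j) =
      ∑ k ∈ K, (Sset m 1).indicator
        (fun y => ENNReal.ofReal ((c * a k) * ∏ j, (T y j) ^ (β k j - 1))) y := by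
    intro y
    by_cases hy : y ∈ Sset m 1
    · have hpos := hTpos y hy
      have hPnn : 0 ≤ P (T y) := by
        rw [hP (T y)]
        exact Finset.sum_nonneg fun k _ => mul_nonneg (ha k)
          (Finset.prod_nonneg fun j _ => pow_nonneg (hpos j).le _)
      have hApos : 0 ≤ c * (∏ i : Fin (m+1), (T y i) ^ (α i - 1)) * P (T y) :=
        mul_nonneg (mul_nonneg hc.le
          (Finset.prod_nonneg fun j _ => Real.rpow_nonneg (hpos j).le _)) hPnn
      rw [hgden]
      simp only [if_pos (show (∀ i, 0 < y i) ∧ ∑ i, y i < 1 from hy)]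
      rw [← ENNReal.ofReal_mul hApos]
      have hreal : (c * (∏ i : Fin (m+1), (T y i) ^ (α i - 1)) * P (T y)) * (∏ j, (T y j) ^ q j)
          = ∑ k ∈ K, (c * a k) * ∏ j, (T y j) ^ (β k j - 1) := by
        rw [hP (T y), Finset.mul_sum, Finset.sum_mul]
        apply Finset.sum_congr rfl
        intro k hk
        have hfac : ∀ j, (T y j) ^ (β k j - 1) =
            (T y j) ^ (α j - 1) * (T y j) ^ (k j) * (T y j) ^ (q j) := by
          intro j
          rw [← Real.rpow_natCast (T y j) (k j), ← Real.rpow_natCast (T y j) (q j),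
            ← Real.rpow_add (hpos j), ← Real.rpow_add (hpos j)]
          congr 1
          rw [hβdef]
          push_cast
          ring
        calc c * (∏ i : Fin (m+1), (T y i) ^ (α i - 1)) * (a k * ∏ i, (T y i) ^ (k i)) *
              (∏ j, (T y j) ^ q j)
            = (c * a k) * ((∏ i : Fin (m+1), (T y i) ^ (α i - 1)) * (∏ i, (T y i) ^ (k i)) *
              (∏ j, (T y j) ^ q j)) := by ring
          _ = (c * a k) * ∏ j, (T y j) ^ (β k j - 1) := by
              rw [← Finset.prod_mul_distrib, ← Finset.prod_mul_distrib]
              congr 1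
              exact Finset.prod_congr rfl fun j _ => (hfac j).symm
      rw [hreal, ENNReal.ofReal_sum_of_nonneg (fun k _ => mul_nonneg
        (mul_nonneg hc.le (ha k))
        (Finset.prod_nonneg fun j _ => Real.rpow_nonneg (hpos j).le _))]
      exact Finset.sum_congr rfl fun k hk => (Set.indicator_of_mem hy
        (fun y => ENNReal.ofReal ((c * a k) * ∏ j, (T y j) ^ (β k j - 1)))).symm
    · rw [hgden]
      simp only [if_neg (show ¬((∀ i, 0 < y i) ∧ ∑ i, y i < 1) from hy), ENNReal.ofReal_zero,
        zero_mul]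
      exact (Finset.sum_eq_zero fun k hk => Set.indicator_of_notMem hy _).symm
  have hterm_meas : ∀ k : (Fin (m+1) → ℕ), Measurable (fun y => (Sset m 1).indicator
      (fun y => ENNReal.ofReal ((c * a k) * ∏ j, (T y j) ^ (β k j - 1))) y) := by
    intro k
    apply Measurable.indicator _ (measurableSet_Sset m 1)
    have hin : Measurable (fun t : Fin (m+1) → ℝ =>
        ENNReal.ofReal ((c * a k) * ∏ j, (t j) ^ (β k j - 1))) := by fun_prop
    exact hin.comp hT
  have hterm : ∀ k ∈ K, (∫⁻ y, (Sset m 1).indicator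
        (fun y => ENNReal.ofReal ((c * a k) * ∏ j, (T y j) ^ (β k j - 1))) y)
      = ENNReal.ofReal ((c * a k) *
          ((∏ j, Real.Gamma (β k j)) / Real.Gamma ((∑ j, (α j + (q j : ℝ))) + n))) := by
    intro k hk
    have hsumk : (∑ i, (k i : ℝ)) = (n : ℝ) := by
      exact_mod_cast congrArg (Nat.cast : ℕ → ℝ) (Finset.mem_filter.mp hk).2
    have hβsum : ∑ j, β k j = (∑ j, (α j + (q j : ℝ))) + n := by
      rw [hβdef]
      rw [Finset.sum_add_distrib, hsumk]
    have hshape : ∀ y : Fin m → ℝ, (∏ j, (T y j) ^ (β k j - 1)) =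
        (∏ i : Fin m, y i ^ (β k i.castSucc - 1)) *
          ((1:ℝ) - ∑ i, y i) ^ (β k (Fin.last m) - 1) := by
      intro y
      rw [Fin.prod_univ_castSucc, hTdef]
      simp only [Fin.snoc_castSucc, Fin.snoc_last]
    calc (∫⁻ y, (Sset m 1).indicator
          (fun y => ENNReal.ofReal ((c * a k) * ∏ j, (T y j) ^ (β k j - 1))) y)
        = ∫⁻ y, ENNReal.ofReal (c * a k) * (Sset m 1).indicator
            (fun y => ENNReal.ofReal ((∏ i : Fin m, y i ^ (β k i.castSucc - 1)) *
              ((1:ℝ) - ∑ i, y i) ^ (β k (Fin.last m) - 1))) y := by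
          apply lintegral_congr
          intro y
          by_cases hy : y ∈ Sset m 1
          · rw [Set.indicator_of_mem hy, Set.indicator_of_mem hy, ← hshape y,
              ENNReal.ofReal_mul (mul_nonneg hc.le (ha k))]
          · rw [Set.indicator_of_notMem hy, Set.indicator_of_notMem hy, mul_zero]
      _ = ENNReal.ofReal (c * a k) * ∫⁻ y, (Sset m 1).indicator
            (fun y => ENNReal.ofReal ((∏ i : Fin m, y i ^ (β k i.castSucc - 1)) *
              ((1:ℝ) - ∑ i, y i) ^ (β k (Fin.last m) - 1))) y :=
          lintegral_const_mul' _ _ ENNReal.ofReal_ne_top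
      _ = ENNReal.ofReal (c * a k) * ENNReal.ofReal ((1:ℝ) ^ ((∑ j, β k j) - 1) *
            ((∏ j, Real.Gamma (β k j)) / Real.Gamma (∑ j, β k j))) := by
          rw [dirichlet m (β k) (hβpos k) 1 one_pos]
      _ = ENNReal.ofReal ((c * a k) *
            ((∏ j, Real.Gamma (β k j)) / Real.Gamma ((∑ j, (α j + (q j : ℝ))) + n))) := by
          rw [Real.one_rpow, one_mul, hβsum, ← ENNReal.ofReal_mul (mul_nonneg hc.le (ha k))]
  have hlin : (∫⁻ x, ENNReal.ofReal (∏ j, x j ^ q j) ∂μ) =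
      ∑ k ∈ K, ENNReal.ofReal ((c * a k) *
        ((∏ j, Real.Gamma (β k j)) / Real.Gamma ((∑ j, (α j + (q j : ℝ))) + n))) := by
    have hcomp : Measurable fun y : Fin m → ℝ => ENNReal.ofReal (∏ j, (T y j) ^ q j) :=
      (hfmeas.ennreal_ofReal).comp hT
    rw [hμ, lintegral_map hfmeas.ennreal_ofReal hT,
      lintegral_withDensity_eq_lintegral_mul _ hgmeas hcomp]
    rw [← Finset.sum_congr rfl hterm, ← lintegral_finset_sum K (fun k _ => hterm_meas k)]
    apply lintegral_congr
    intro y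
    rw [Pi.mul_apply]
    exact key y
  rw [hint, hlin]
  have hΓT : 0 < Real.Gamma ((∑ j, (α j + (q j : ℝ))) + n) :=
    Real.Gamma_pos_of_pos (add_pos_of_pos_of_nonneg
      (Finset.sum_pos (fun j _ => hαq j) Finset.univ_nonempty) (Nat.cast_nonneg n))
  have htermnn : ∀ k ∈ K, 0 ≤ (c * a k) *
      ((∏ j, Real.Gamma (β k j)) / Real.Gamma ((∑ j, (α j + (q j : ℝ))) + n)) := by
    intro k _
    apply mul_nonneg (mul_nonneg hc.le (ha k))
    apply div_nonneg _ hΓT.le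
    exact Finset.prod_nonneg fun j _ => (Real.Gamma_pos_of_pos (hβpos k j)).le
  rw [← ENNReal.ofReal_sum_of_nonneg htermnn,
    ENNReal.toReal_ofReal (Finset.sum_nonneg htermnn), Finset.mul_sum]
  apply Finset.sum_congr rfl
  intro k hk
  have hΓ : ∏ j, Real.Gamma (β k j) =
      (∏ j, Real.Gamma (α j + q j)) * ∏ j, ∏ r ∈ Finset.range (k j), ((α j + q j) + r) := by
    rw [← Finset.prod_mul_distrib]
    apply Finset.prod_congr rfl
    intro j _
    rw [hβdef]
    exact gamma_shift (α j + (q j : ℝ)) (hαq j) (k j)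
  rw [hΓ]
  ring

end Moment


end DirichletAux

/-- Let `α ∈ (0,∞)^d`, let `P(t) = ∑_{|k|=n} a_k t^k` be a homogeneous
polynomial of degree `n` with nonnegative coefficients (not all zero), and let `μ` be
the probability measure on the simplex `T_d` with density proportional to
`(∏ tᵢ^{αᵢ-1}) P(t)` (realized via `y ↦ (y, 1-∑y)` from Lebesgue measure on the open
standard simplex of `ℝ^{d-1}`).  With `Q(y) = ∑_{|k|=n} a_k ∏ᵢ (yᵢ)_{kᵢ}` (rising
factorials), the reinforcement law `V i p = E_μ[Xᵢ X^p]/E_μ[X^p]` equals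
`((αᵢ+pᵢ)/((∑ⱼ αⱼ+pⱼ)+n)) · Q(α+p+eᵢ)/Q(α+p)`. -/
theorem stmt_12 (m : ℕ) (α : Fin (m + 1) → ℝ) (hα : ∀ i, 0 < α i)
    (n : ℕ) (a : (Fin (m + 1) → ℕ) → ℝ) (ha : ∀ k, 0 ≤ a k)
    (hne : ∃ k ∈ (Fintype.piFinset fun _ : Fin (m + 1) => range (n + 1)).filter
        (fun k => ∑ i, k i = n), a k ≠ 0)
    (P : (Fin (m + 1) → ℝ) → ℝ)
    (hP : ∀ t, P t = ∑ k ∈ (Fintype.piFinset fun _ : Fin (m + 1) => range (n + 1)).filter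
        (fun k => ∑ i, k i = n), a k * ∏ i, t i ^ k i)
    (Q : (Fin (m + 1) → ℝ) → ℝ)
    (hQ : ∀ y, Q y = ∑ k ∈ (Fintype.piFinset fun _ : Fin (m + 1) => range (n + 1)).filter
        (fun k => ∑ i, k i = n), a k * ∏ i, ∏ r ∈ range (k i), (y i + r))
    (c : ℝ) (hc : 0 < c)
    (μ : Measure (Fin (m + 1) → ℝ)) (hprob : IsProbabilityMeasure μ)
    (hμ : μ = Measure.map (fun y : Fin m → ℝ => Fin.snoc y (1 - ∑ i, y i))
      ((volume : Measure (Fin m → ℝ)).withDensity fun y =>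
        ENNReal.ofReal
          (if (∀ i, 0 < y i) ∧ ∑ i, y i < 1 then
            c * (∏ i : Fin (m + 1), (Fin.snoc y (1 - ∑ j, y j) i) ^ (α i - 1)) *
              P (Fin.snoc y (1 - ∑ j, y j))
          else 0))) :
    ∀ (p : Fin (m + 1) → ℕ) (i : Fin (m + 1)),
      (∫ x, x i * ∏ j, x j ^ p j ∂μ) / (∫ x, ∏ j, x j ^ p j ∂μ) =
        ((α i + p i) / ((∑ j, (α j + p j)) + n)) *
          (Q (Function.update (fun j => α j + p j) i (α i + p i + 1)) /
            Q (fun j => α j + p j)) := by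
  classical
  intro p i
  set K := (Fintype.piFinset fun _ : Fin (m + 1) => Finset.range (n + 1)).filter
      (fun k => ∑ i, k i = n) with hK
  set q' : Fin (m + 1) → ℕ := Function.update p i (p i + 1) with hq'
  set S : ℝ := ∑ j, (α j + (p j : ℝ)) with hS
  have hαp : ∀ j, 0 < α j + (p j : ℝ) :=
    fun j => add_pos_of_pos_of_nonneg (hα j) (Nat.cast_nonneg _)
  have hSpos : 0 < S := Finset.sum_pos (fun j _ => hαp j) Finset.univ_nonempty
  have hSn : 0 < S + n := add_pos_of_pos_of_nonneg hSpos (Nat.cast_nonneg _)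
  -- numerator integrand as a pure monomial
  have hNint : (fun x : Fin (m+1) → ℝ => x i * ∏ j, x j ^ p j) =
      fun x => ∏ j, x j ^ q' j := by
    funext x
    have h1 : ∏ j, x j ^ p j = x i ^ p i * ∏ j ∈ Finset.univ.erase i, x j ^ p j :=
      (Finset.mul_prod_erase Finset.univ _ (Finset.mem_univ i)).symm
    have h2 : ∏ j, x j ^ q' j = x i ^ q' i * ∏ j ∈ Finset.univ.erase i, x j ^ q' j :=
      (Finset.mul_prod_erase Finset.univ _ (Finset.mem_univ i)).symm
    have h3 : ∏ j ∈ Finset.univ.erase i, x j ^ q' j =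
        ∏ j ∈ Finset.univ.erase i, x j ^ p j :=
      Finset.prod_congr rfl fun j hj => by
        rw [hq', Function.update_of_ne (Finset.mem_erase.mp hj).1]
    have h4 : q' i = p i + 1 := by rw [hq', Function.update_self]
    rw [h1, h2, h3, h4]
    ring
  have hQeq : ∀ j, Function.update (fun j => α j + (p j : ℝ)) i (α i + p i + 1) j
      = α j + (q' j : ℝ) := by
    intro j
    by_cases hj : j = i
    · subst hj
      rw [Function.update_self, hq', Function.update_self]
      push_cast
      ring
    · rw [Function.update_of_ne hj, hq', Function.update_of_ne hj]
  -- apply the moment formula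
  have hD := moment_formula hα ha hP hc hμ p
  have hN := moment_formula hα ha hP hc hμ q'
  rw [hNint]
  rw [hN, hD]
  -- identify sums with Q
  have hQd : (∑ k ∈ K, a k * ∏ j, ∏ r ∈ Finset.range (k j), ((α j + (p j:ℝ)) + r)) =
      Q (fun j => α j + (p j : ℝ)) := by
    rw [hQ]
  have hQn : (∑ k ∈ K, a k * ∏ j, ∏ r ∈ Finset.range (k j), ((α j + (q' j:ℝ)) + r)) =
      Q (Function.update (fun j => α j + (p j : ℝ)) i (α i + p i + 1)) := by
    rw [hQ]
    apply Finset.sum_congr rfl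
    intro k _
    congr 1
    apply Finset.prod_congr rfl
    intro j _
    apply Finset.prod_congr rfl
    intro r _
    rw [hQeq j]
  -- arithmetic identities
  have hsum : (∑ j, (α j + (q' j : ℝ))) = S + 1 := by
    have h5 : (∑ j, (q' j : ℝ)) = (∑ j, (p j : ℝ)) + 1 := by
      have : ∑ j, q' j = (∑ j, p j) + 1 := by
        rw [hq', Finset.sum_update_of_mem (Finset.mem_univ i),
          Finset.sum_eq_sum_sdiff_singleton_add (Finset.mem_univ i) p]
        ring
      exact_mod_cast congrArg (Nat.cast : ℕ → ℝ) this
    rw [Finset.sum_add_distrib, h5, hS, Finset.sum_add_distrib]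
    ring
  have hGam : (∏ j, Real.Gamma (α j + (q' j:ℝ))) =
      (α i + p i) * ∏ j, Real.Gamma (α j + (p j:ℝ)) := by
    have h1 : ∏ j, Real.Gamma (α j + (p j:ℝ)) =
        Real.Gamma (α i + p i) * ∏ j ∈ Finset.univ.erase i, Real.Gamma (α j + (p j:ℝ)) :=
      (Finset.mul_prod_erase Finset.univ _ (Finset.mem_univ i)).symm
    have h2 : ∏ j, Real.Gamma (α j + (q' j:ℝ)) =
        Real.Gamma (α i + (q' i:ℝ)) *
          ∏ j ∈ Finset.univ.erase i, Real.Gamma (α j + (q' j:ℝ)) :=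
      (Finset.mul_prod_erase Finset.univ _ (Finset.mem_univ i)).symm
    have h3 : ∏ j ∈ Finset.univ.erase i, Real.Gamma (α j + (q' j:ℝ)) =
        ∏ j ∈ Finset.univ.erase i, Real.Gamma (α j + (p j:ℝ)) :=
      Finset.prod_congr rfl fun j hj => by
        rw [hq', Function.update_of_ne (Finset.mem_erase.mp hj).1]
    have h4 : Real.Gamma (α i + (q' i:ℝ)) = (α i + p i) * Real.Gamma (α i + p i) := by
      rw [hq', Function.update_self]
      push_cast
      rw [show α i + ((p i:ℝ) + 1) = (α i + p i) + 1 by ring,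
        Real.Gamma_add_one (hαp i).ne']
    rw [h2, h3, h4, h1]
    ring
  have hGamSn : Real.Gamma ((S + 1) + n) = (S + n) * Real.Gamma (S + n) := by
    rw [show (S + 1) + (n:ℝ) = (S + n) + 1 by ring, Real.Gamma_add_one hSn.ne']
  -- positivity facts
  have hGpos : 0 < ∏ j, Real.Gamma (α j + (p j:ℝ)) :=
    Finset.prod_pos fun j _ => Real.Gamma_pos_of_pos (hαp j)
  have hΓSn : 0 < Real.Gamma (S + n) := Real.Gamma_pos_of_pos hSn
  have hQdpos : 0 < Q (fun j => α j + (p j : ℝ)) := by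
    rw [hQ]
    obtain ⟨k0, hk0K, hk0⟩ := hne
    apply Finset.sum_pos'
    · intro k _
      apply mul_nonneg (ha k)
      exact Finset.prod_nonneg fun j _ => Finset.prod_nonneg fun r _ =>
        (add_pos_of_pos_of_nonneg (hαp j) (Nat.cast_nonneg r)).le
    · refine ⟨k0, hk0K, ?_⟩
      apply mul_pos ((ha k0).lt_of_ne' hk0)
      exact Finset.prod_pos fun j _ => Finset.prod_pos fun r _ =>
        add_pos_of_pos_of_nonneg (hαp j) (Nat.cast_nonneg r)
  rw [hQd, hQn, hsum, hGam, hGamSn]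
  rw [hS] at *
  field_simp
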